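/- Let n > 1 be an integer with prime factorization n = ∏_{i=1}^t p_i^{α_i}, and let a, b be integers. The number of common neighbors of a and b in the unitary Cayley graph G_{ℤ/nℤ} equals n · ∏_{i=1}^t (1 - ε_i/p_i), where ε_i = 1 if p_i divides a - b and ε_i = 2 otherwise. -/

import Mathlib

/-- The unitary Cayley graph of a commutative ring: `a` is adjacent to `b`
iff `a ≠ b` and `a - b` is a unit. -/
def unitaryCayley (X : Type*) [CommRing X] : SimpleGraph X where
  Adj a b := a ≠ b ∧ IsUnit (a - b)
  symm := by
    constructor
    rintro a b ⟨h1, h2⟩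
    exact ⟨h1.symm, neg_sub a b ▸ h2.neg⟩
  loopless := by constructor; rintro a ⟨h, _⟩; exact h rfl

lemma isUnit_prod_iff {M N : Type*} [Monoid M] [Monoid N] {x : M × N} :
    IsUnit x ↔ IsUnit x.1 ∧ IsUnit x.2 := by
  constructor
  · intro h
    exact ⟨h.map (MonoidHom.fst M N), h.map (MonoidHom.snd M N)⟩
  · rintro ⟨⟨u, hu⟩, ⟨v, hv⟩⟩
    exact ⟨⟨(↑u, ↑v), (↑u⁻¹, ↑v⁻¹), by ext <;> simp, by ext <;> simp⟩, by
      simp [Prod.ext_iff, hu, hv]⟩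

lemma isUnit_ringEquiv {R S : Type*} [Ring R] [Ring S] (e : R ≃+* S) {x : R} :
    IsUnit (e x) ↔ IsUnit x :=
  ⟨fun h => by simpa using h.map e.symm.toRingHom, fun h => h.map e.toRingHom⟩

/-- fiber equivalence for castHom -/
def fiberEquiv (Nn p : ℕ) [NeZero Nn] [NeZero p] (h : p ∣ Nn) (P : ZMod p → Prop) :
    {c : ZMod Nn // P ((ZMod.castHom h (ZMod p)) c)} ≃
      {t : ZMod p // P t} × {x : ZMod Nn // (ZMod.castHom h (ZMod p)) x = 0} := by
  set π := ZMod.castHom h (ZMod p) with hπ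
  have hs : ∀ t : ZMod p, π ((t.val : ℕ) : ZMod Nn) = t := fun t => by
    rw [map_natCast]; exact ZMod.natCast_rightInverse t
  exact {
    toFun := fun c => (⟨π c.1, c.2⟩, ⟨c.1 - ((π c.1).val : ZMod Nn), by
      rw [map_sub, hs, sub_self]⟩)
    invFun := fun tx => ⟨((tx.1.1.val : ℕ) : ZMod Nn) + tx.2.1, by
      rw [map_add, hs, tx.2.2, add_zero]; exact tx.1.2⟩
    left_inv := fun c => by
      apply Subtype.ext
      simp
    right_inv := fun tx => by
      ext
      · simp [map_add, hs, tx.2.2]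
      · simp [map_add, hs, tx.2.2]
  }

lemma card_fiber (Nn p : ℕ) [NeZero Nn] [NeZero p] (h : p ∣ Nn) (P : ZMod p → Prop) :
    Nat.card {c : ZMod Nn // P ((ZMod.castHom h (ZMod p)) c)} =
      Nat.card {t : ZMod p // P t} * (Nn / p) := by
  have key : ∀ Q : ZMod p → Prop, Nat.card {c : ZMod Nn // Q ((ZMod.castHom h (ZMod p)) c)} =
      Nat.card {t : ZMod p // Q t} *
        Nat.card {x : ZMod Nn // (ZMod.castHom h (ZMod p)) x = 0} := fun Q => by
    rw [Nat.card_congr (fiberEquiv Nn p h Q), Nat.card_prod]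
  have htop := key (fun _ => True)
  rw [Nat.card_congr (Equiv.subtypeUnivEquiv fun _ => trivial),
    Nat.card_congr (Equiv.subtypeUnivEquiv fun _ => trivial), Nat.card_zmod, Nat.card_zmod] at htop
  have hker : Nat.card {x : ZMod Nn // (ZMod.castHom h (ZMod p)) x = 0} = Nn / p := by
    obtain ⟨k, rfl⟩ := id h
    have hp : 0 < p := Nat.pos_of_ne_zero (NeZero.ne p)
    rw [Nat.mul_div_cancel_left _ hp]
    have : p * k = p * Nat.card {x : ZMod (p*k) // (ZMod.castHom h (ZMod p)) x = 0} := htop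
    exact (Nat.eq_of_mul_eq_mul_left hp this.symm)
  rw [key P, hker]

noncomputable def Ncard (a b : ℤ) (n : ℕ) : ℕ :=
  Nat.card {c : ZMod n // IsUnit (c - (a : ZMod n)) ∧ IsUnit (c - (b : ZMod n))}

lemma Ncard_one (a b : ℤ) : Ncard a b 1 = 1 := by
  rw [Ncard, Nat.card_eq_one_iff_unique]
  refine ⟨?_, ⟨⟨0, isUnit_of_subsingleton _, isUnit_of_subsingleton _⟩⟩⟩
  infer_instance

lemma Ncard_mul (a b : ℤ) (m n : ℕ) (h : m.Coprime n) :
    Ncard a b (m * n) = Ncard a b m * Ncard a b n := by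
  have e := ZMod.chineseRemainder h
  rw [Ncard, Ncard, Ncard, ← Nat.card_prod]
  apply Nat.card_congr
  refine (Equiv.subtypeEquiv e.toEquiv fun c => ?_).trans Equiv.subtypeProdEquivProd
  rw [← isUnit_ringEquiv e (x := c - (a : ZMod (m*n))),
      ← isUnit_ringEquiv e (x := c - (b : ZMod (m*n))), map_sub, map_sub,
      map_intCast, map_intCast]
  simp only [isUnit_prod_iff, Prod.fst_sub, Prod.snd_sub, Prod.fst_intCast, Prod.snd_intCast,
    RingEquiv.toEquiv_eq_coe, Equiv.coe_fn_mk, EquivLike.coe_coe]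
  tauto

lemma Ncard_pow (a b : ℤ) (p k : ℕ) (hp : p.Prime) (hk : k ≠ 0) :
    Ncard a b (p ^ k) = (p - (if (p : ℤ) ∣ a - b then 1 else 2)) * p ^ (k - 1) := by
  haveI : Fact p.Prime := ⟨hp⟩
  haveI : NeZero (p ^ k) := ⟨pow_ne_zero k hp.ne_zero⟩
  have hdvd : p ∣ p ^ k := dvd_pow_self p hk
  set π := ZMod.castHom hdvd (ZMod p) with hπ
  -- units characterization
  have hu : ∀ x : ZMod (p ^ k), IsUnit x ↔ π x ≠ 0 := by
    intro x
    have h1 : ((x.val : ℕ) : ZMod (p ^ k)) = x := ZMod.natCast_rightInverse x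
    have h2 : π x = ((x.val : ℕ) : ZMod p) := by
      conv_lhs => rw [← h1]
      rw [map_natCast]
    rw [h2]
    conv_lhs => rw [← h1]
    rw [ZMod.isUnit_iff_coprime, Ne, ZMod.natCast_eq_zero_iff,
      Nat.coprime_pow_right_iff (Nat.pos_of_ne_zero hk), Nat.coprime_comm,
      hp.coprime_iff_not_dvd]
  have hcond : ∀ c : ZMod (p ^ k),
      (IsUnit (c - (a : ZMod (p ^ k))) ∧ IsUnit (c - (b : ZMod (p ^ k)))) ↔
        (π c ≠ (a : ZMod p) ∧ π c ≠ (b : ZMod p)) := by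
    intro c
    rw [hu, hu, map_sub, map_sub, map_intCast, map_intCast, sub_ne_zero, sub_ne_zero]
  have := card_fiber (p ^ k) p hdvd (fun t => t ≠ (a : ZMod p) ∧ t ≠ (b : ZMod p))
  rw [Ncard]
  rw [Nat.card_congr (Equiv.subtypeEquivRight hcond), this]
  have hquot : p ^ k / p = p ^ (k - 1) := by
    conv_lhs => rw [← Nat.sub_add_cancel (Nat.one_le_iff_ne_zero.mpr hk), pow_succ]
    exact Nat.mul_div_cancel _ hp.pos
  rw [hquot]
  congr 1
  -- count in ZMod p
  have hAB : ((a : ZMod p) = (b : ZMod p)) ↔ (p : ℤ) ∣ a - b := by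
    rw [ZMod.intCast_eq_intCast_iff, Int.modEq_iff_dvd, dvd_sub_comm]
  classical
  rw [Nat.card_eq_fintype_card, Fintype.card_subtype]
  have hfilter : (Finset.univ.filter (fun t : ZMod p => t ≠ (a : ZMod p) ∧ t ≠ (b : ZMod p)))
      = ({(a : ZMod p), (b : ZMod p)} : Finset (ZMod p))ᶜ := by
    ext t; simp [not_or]
  rw [hfilter, Finset.card_compl, ZMod.card]
  split_ifs with hd
  · rw [show ((a : ZMod p) : ZMod p) = (b : ZMod p) from hAB.mpr hd]
    simp
  · rw [Finset.card_pair (fun hc => hd (hAB.mp hc))]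

theorem unitaryCayley_common_neighbors (n : ℕ) (hn : 1 < n) (a b : ℤ) :
    (Nat.card {c : ZMod n // (unitaryCayley (ZMod n)).Adj c (a : ZMod n) ∧
        (unitaryCayley (ZMod n)).Adj c (b : ZMod n)} : ℚ) =
      n * ∏ p ∈ n.primeFactors,
        (1 - (if (p : ℤ) ∣ (a - b) then (1 : ℚ) else 2) / p) := by
  haveI : Fact (1 < n) := ⟨hn⟩
  haveI : NeZero n := ⟨by omega⟩
  have hn0 : n ≠ 0 := by omega
  have hadj : ∀ c : ZMod n, ((unitaryCayley (ZMod n)).Adj c (a : ZMod n) ∧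
      (unitaryCayley (ZMod n)).Adj c (b : ZMod n)) ↔
      (IsUnit (c - (a : ZMod n)) ∧ IsUnit (c - (b : ZMod n))) := by
    intro c
    constructor
    · rintro ⟨⟨_, h1⟩, _, h2⟩; exact ⟨h1, h2⟩
    · rintro ⟨h1, h2⟩
      refine ⟨⟨fun hc => ?_, h1⟩, fun hc => ?_, h2⟩
      · rw [hc, sub_self] at h1; exact not_isUnit_zero h1
      · rw [hc, sub_self] at h2; exact not_isUnit_zero h2
  have hN : Nat.card {c : ZMod n // (unitaryCayley (ZMod n)).Adj c (a : ZMod n) ∧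
      (unitaryCayley (ZMod n)).Adj c (b : ZMod n)} = Ncard a b n :=
    Nat.card_congr (Equiv.subtypeEquivRight hadj)
  rw [hN, Nat.multiplicative_factorization (Ncard a b) (Ncard_mul a b) (Ncard_one a b) hn0,
    Finsupp.prod, Nat.support_factorization, Nat.cast_prod]
  have hn' : (n : ℚ) = ∏ p ∈ n.primeFactors, (p : ℚ) ^ (n.factorization p) := by
    conv_lhs => rw [← Nat.factorization_prod_pow_eq_self hn0]
    rw [Finsupp.prod, Nat.support_factorization, Nat.cast_prod]
    exact Finset.prod_congr rfl fun p _ => by push_cast; ring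
  rw [hn', ← Finset.prod_mul_distrib]
  refine Finset.prod_congr rfl fun p hp => ?_
  have hprime : p.Prime := Nat.prime_of_mem_primeFactors hp
  have hα : n.factorization p ≠ 0 := by
    rw [← Finsupp.mem_support_iff, Nat.support_factorization]; exact hp
  set α := n.factorization p with hαdef
  rw [Ncard_pow a b p α hprime hα]
  have hp2 : 2 ≤ p := hprime.two_le
  have hpQ : (p : ℚ) ≠ 0 := by positivity
  have hα1 : α - 1 + 1 = α := Nat.succ_pred_eq_of_ne_zero hα
  split_ifs with hd
  · rw [Nat.cast_mul, Nat.cast_sub (by omega : 1 ≤ p), Nat.cast_pow]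
    conv_rhs => rw [← hα1, pow_succ]
    push_cast
    field_simp
  · rw [Nat.cast_mul, Nat.cast_sub (by omega : 2 ≤ p), Nat.cast_pow]
    conv_rhs => rw [← hα1, pow_succ]
    push_cast
    field_simp
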